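/- Let G ⊆ ℝⁿ × ℝ be an open set and F : ℝⁿ × ℝ → Set ℝⁿ a set-valued map that is upper semicontinuous on G and such that for every (x,t) ∈ G the set F(x,t) is nonempty, compact and convex. Then for every point (x₀,t₀) ∈ G there exists t₁ > t₀ and a solution x of the differential inclusion ẋ ∈ F(x,t) on [t₀,t₁] with x(t₀) = x₀ and (x(t),t) ∈ G for all t ∈ [t₀,t₁]. -/

import Mathlib

open MeasureTheory Set Filter

noncomputable section

/-- `ℝⁿ` as a Euclidean space. -/
abbrev En (n : ℕ) := EuclideanSpace ℝ (Fin n)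

/-- `x` is a solution of the differential inclusion `ẋ ∈ F (x, t)` on the time interval `I`
(containing `t₀`): there is a locally integrable `v` with
`x t = x t₀ + ∫_{t₀}^t v` on `I` and `v t ∈ F (x t) t` for a.e. `t ∈ I`. -/
def IsDISolution {n : ℕ} (F : En n → ℝ → Set (En n)) (I : Set ℝ) (t₀ : ℝ)
    (x : ℝ → En n) : Prop :=
  ∃ v : ℝ → En n, LocallyIntegrable v volume ∧
    (∀ t ∈ I, x t = x t₀ + ∫ s in t₀..t, v s) ∧
    (∀ᵐ t ∂(volume.restrict I), v t ∈ F (x t) t)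

/-- `F` is upper semicontinuous on `G`: at every point `p ∈ G`, the one-sided Hausdorff
excess `β(F q, F p) = sup_{w ∈ F q} dist (w, F p)` tends to `0` as `q → p`. -/
def USCOn {n : ℕ} (F : En n → ℝ → Set (En n)) (G : Set (En n × ℝ)) : Prop :=
  ∀ p ∈ G, ∀ ε > 0, ∃ δ > 0, ∀ q : En n × ℝ, dist q p < δ →
    ∀ w ∈ F q.1 q.2, Metric.infDist w (F p.1 p.2) < ε

open Metric Topology intervalIntegral

variable {E : Type*} [NormedAddCommGroup E] [NormedSpace ℝ E]

/-- difference quotients along the sequence `1/(j+1)` tend to the derivative -/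
theorem quot_tendsto {g : ℝ → E} {d : E} {c : ℝ} (hg : HasDerivAt g d c) :
    Tendsto (fun j : ℕ => (((j : ℝ) + 1)⁻¹)⁻¹ • (g (c + ((j : ℝ) + 1)⁻¹) - g c)) atTop (𝓝 d) := by
  have hslope := hasDerivAt_iff_tendsto_slope.1 hg
  have hseq : Tendsto (fun j : ℕ => c + ((j : ℝ) + 1)⁻¹) atTop (𝓝[≠] c) := by
    apply tendsto_nhdsWithin_of_tendsto_nhds_of_eventually_within
    · have : Tendsto (fun j : ℕ => ((j : ℝ) + 1)⁻¹) atTop (𝓝 0) :=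
        tendsto_one_div_add_atTop_nhds_zero_nat.congr (by intro j; rw [one_div])
      simpa using tendsto_const_nhds.add this
    · filter_upwards with j
      have : (0 : ℝ) < ((j : ℝ) + 1)⁻¹ := by positivity
      simp only [mem_compl_iff, mem_singleton_iff]
      intro h
      nlinarith [this, h]
  have := hslope.comp hseq
  refine this.congr (fun j => ?_)
  have hj : (0:ℝ) < ((j : ℝ) + 1)⁻¹ := by positivity
  simp [Function.comp, slope_def_module, hj.ne']

/-- FTC for Lipschitz functions into finite-dimensional spaces. -/
theorem lip_ftc [FiniteDimensional ℝ E] [MeasurableSpace E] [BorelSpace E]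
    {M : NNReal} {f : ℝ → E} (hf : LipschitzWith M f)
    {a b : ℝ} (hab : a ≤ b) :
    ∫ t in a..b, deriv f t = f b - f a := by
  set u : ℕ → ℝ := fun j => ((j : ℝ) + 1)⁻¹ with hu
  have hu0 : ∀ j, (0:ℝ) < u j := fun j => by positivity
  set Fj : ℕ → ℝ → E := fun j t => (u j)⁻¹ • (f (t + u j) - f t) with hFj
  have hfc : Continuous f := hf.continuous
  -- a.e. convergence of difference quotients
  have hae : ∀ᵐ t ∂(volume.restrict (Ioc a b)),
      Tendsto (fun j => Fj j t) atTop (𝓝 (deriv f t)) := by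
    have h1 : ∀ᵐ t ∂(volume : Measure ℝ), DifferentiableAt ℝ f t :=
      hf.ae_differentiableAt
    refine ae_restrict_of_ae (h1.mono fun t ht => ?_)
    exact quot_tendsto ht.hasDerivAt
  -- dominated convergence
  have hdct : Tendsto (fun j => ∫ t in Ioc a b, Fj j t) atTop
      (𝓝 (∫ t in Ioc a b, deriv f t)) := by
    refine tendsto_integral_of_dominated_convergence (fun _ => (M : ℝ)) ?_ ?_ ?_ hae
    · intro j
      exact ((hfc.comp (continuous_id.add continuous_const)).sub hfc).const_smul
        _ |>.aestronglyMeasurable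
    · exact integrableOn_const measure_Ioc_lt_top.ne
    · intro j
      refine ae_of_all _ fun t => ?_
      have : ‖f (t + u j) - f t‖ ≤ (M : ℝ) * u j := by
        have := hf.dist_le_mul (t + u j) t
        rw [dist_eq_norm] at this
        simpa [abs_of_pos (hu0 j), Real.dist_eq] using this
      calc ‖Fj j t‖ = (u j)⁻¹ * ‖f (t + u j) - f t‖ := by
            rw [hFj]; rw [norm_smul, Real.norm_eq_abs, abs_of_pos (inv_pos.2 (hu0 j))]
        _ ≤ (u j)⁻¹ * ((M : ℝ) * u j) := by
            exact mul_le_mul_of_nonneg_left this (by positivity)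
        _ = (M : ℝ) := by rw [mul_comm (M:ℝ), ← mul_assoc, inv_mul_cancel₀ (hu0 j).ne', one_mul]
  -- compute the integrals of the difference quotients
  have hint : ∀ c d : ℝ, IntervalIntegrable f volume c d := fun c d =>
    hfc.intervalIntegrable c d
  have hcomp : ∀ j, ∫ t in Ioc a b, Fj j t
      = (u j)⁻¹ • ((∫ t in b..(b + u j), f t) - ∫ t in a..(a + u j), f t) := by
    intro j
    rw [← intervalIntegral.integral_of_le hab]
    have h1 : ∫ t in a..b, Fj j t
        = (u j)⁻¹ • ((∫ t in a..b, f (t + u j)) - ∫ t in a..b, f t) := by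
      rw [← intervalIntegral.integral_sub
        (((by fun_prop : Continuous fun t : ℝ => f (t + u j))).intervalIntegrable a b)
        (hint a b), ← intervalIntegral.integral_smul]
    rw [h1, intervalIntegral.integral_comp_add_right]
    congr 1
    have e1 : ∫ t in (a + u j)..(b + u j), f t
        = (∫ t in (a + u j)..b, f t) + ∫ t in b..(b + u j), f t :=
      (intervalIntegral.integral_add_adjacent_intervals (hint _ _) (hint _ _)).symm
    have e2 : ∫ t in a..b, f t
        = (∫ t in a..(a + u j), f t) + ∫ t in (a + u j)..b, f t :=
      (intervalIntegral.integral_add_adjacent_intervals (hint _ _) (hint _ _)).symm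
    rw [e1, e2]; abel
  -- limits of the boundary averages
  have hbnd : ∀ c : ℝ, Tendsto (fun j => (u j)⁻¹ • ∫ t in c..(c + u j), f t)
      atTop (𝓝 (f c)) := by
    intro c
    have hG : HasDerivAt (fun s => ∫ t in c..s, f t) (f c) c := by
      refine intervalIntegral.integral_hasDerivAt_right (hint c c)
        hfc.stronglyMeasurable.stronglyMeasurableAtFilter hfc.continuousAt
    have := quot_tendsto hG
    refine this.congr fun j => ?_
    simp [hu]
  have hlim2 : Tendsto (fun j => ∫ t in Ioc a b, Fj j t) atTop (𝓝 (f b - f a)) := by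
    simp_rw [hcomp, smul_sub]
    exact (hbnd b).sub (hbnd a)
  have := tendsto_nhds_unique hdct hlim2
  rw [intervalIntegral.integral_of_le hab, this]

variable {n : ℕ}

/-- Euler polygon nodes. -/
def eulerY (sel : En n × ℝ → En n) (x₀ : En n) (t₀ h : ℝ) : ℕ → En n
  | 0 => x₀
  | (i+1) => eulerY sel x₀ t₀ h i + h • sel (eulerY sel x₀ t₀ h i, t₀ + i * h)

/-- index of the grid interval containing `t`, clamped at `N`. -/
def eulerIdx (t₀ h : ℝ) (N : ℕ) (t : ℝ) : ℕ := min N ⌊(t - t₀)/h⌋₊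

/-- piecewise-constant Euler velocity. -/
def eulerV (sel : En n × ℝ → En n) (x₀ : En n) (t₀ h : ℝ) (N : ℕ) (t : ℝ) : En n :=
  sel (eulerY sel x₀ t₀ h (eulerIdx t₀ h N t), t₀ + (eulerIdx t₀ h N t) * h)

/-- Euler polygon as primitive of its velocity. -/
def eulerX (sel : En n × ℝ → En n) (x₀ : En n) (t₀ h : ℝ) (N : ℕ) (t : ℝ) : En n :=
  x₀ + ∫ s in t₀..t, eulerV sel x₀ t₀ h N s

theorem eulerIdx_le (t₀ h : ℝ) (N : ℕ) (t : ℝ) : eulerIdx t₀ h N t ≤ N := min_le_left _ _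

theorem eulerIdx_measurable {t₀ h : ℝ} (hh : 0 < h) (N : ℕ) :
    Measurable (eulerIdx t₀ h N) := by
  have : Monotone (eulerIdx t₀ h N) := by
    intro s t hst
    refine min_le_min le_rfl (Nat.floor_mono ?_)
    exact (div_le_div_iff_of_pos_right hh).2 (by linarith)
  exact this.measurable

theorem eulerV_measurable {sel : En n × ℝ → En n} {x₀ : En n} {t₀ h : ℝ} (hh : 0 < h)
    (N : ℕ) : Measurable (eulerV sel x₀ t₀ h N) := by
  have : eulerV sel x₀ t₀ h N =
      (fun i : ℕ => sel (eulerY sel x₀ t₀ h i, t₀ + i * h)) ∘ eulerIdx t₀ h N := rfl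
  rw [this]
  exact measurable_from_nat.comp (eulerIdx_measurable hh N)

section bounds

variable {sel : En n × ℝ → En n} {x₀ : En n} {t₀ h M r : ℝ} {N : ℕ}

theorem eulerY_dist (hh : 0 < h) (hM : 0 ≤ M)
    (hselB : ∀ q : En n × ℝ, dist q (x₀, t₀) ≤ r → ‖sel q‖ ≤ M)
    (hroom : (M + 1) * ((N + 1) * h) ≤ r) :
    ∀ i ≤ N + 1, ‖eulerY sel x₀ t₀ h i - x₀‖ ≤ M * (i * h) := by
  intro i hi
  induction i with
  | zero => simp [eulerY]
  | succ i ih =>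
    have hiN : i ≤ N := Nat.lt_succ_iff.1 hi
    have hIH := ih (hiN.trans (Nat.le_succ N))
    have h2 : dist (t₀ + (i:ℝ) * h) t₀ = i * h := by
      rw [Real.dist_eq, add_sub_cancel_left, abs_of_nonneg (by positivity)]
    have hih : (i:ℝ) * h ≤ ((N:ℝ)+1) * h := by
      have : (i:ℝ) ≤ (N:ℝ)+1 := by exact_mod_cast hiN.trans (Nat.le_succ N)
      nlinarith
    have hball : dist ((eulerY sel x₀ t₀ h i, t₀ + i * h) : En n × ℝ) (x₀, t₀) ≤ r := by
      rw [Prod.dist_eq]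
      refine max_le ?_ ?_
      · rw [dist_eq_norm]; nlinarith
      · rw [h2]
        nlinarith [mul_nonneg hM (by positivity : (0:ℝ) ≤ ((N:ℝ)+1)*h)]
    have hstep : ‖h • sel (eulerY sel x₀ t₀ h i, t₀ + i * h)‖ ≤ h * M := by
      rw [norm_smul, Real.norm_eq_abs, abs_of_pos hh]
      exact mul_le_mul_of_nonneg_left (hselB _ hball) hh.le
    have : eulerY sel x₀ t₀ h (i+1) - x₀
        = (eulerY sel x₀ t₀ h i - x₀) + h • sel (eulerY sel x₀ t₀ h i, t₀ + i * h) := by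
      rw [eulerY]; abel
    rw [this]
    calc ‖(eulerY sel x₀ t₀ h i - x₀) + h • sel (eulerY sel x₀ t₀ h i, t₀ + i * h)‖
        ≤ ‖eulerY sel x₀ t₀ h i - x₀‖ + ‖h • sel (eulerY sel x₀ t₀ h i, t₀ + i * h)‖ :=
          norm_add_le _ _
      _ ≤ M * (i * h) + h * M := add_le_add hIH hstep
      _ ≤ M * ((i+1 : ℕ) * h) := by push_cast; nlinarith

theorem eulerY_ball (hh : 0 < h) (hM : 0 ≤ M)
    (hselB : ∀ q : En n × ℝ, dist q (x₀, t₀) ≤ r → ‖sel q‖ ≤ M)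
    (hroom : (M + 1) * ((N + 1) * h) ≤ r) :
    ∀ i ≤ N + 1, dist ((eulerY sel x₀ t₀ h i, t₀ + i * h) : En n × ℝ) (x₀, t₀) ≤ r := by
  intro i hi
  have hd := eulerY_dist hh hM hselB hroom i hi
  have hih : (i:ℝ) * h ≤ ((N:ℝ)+1) * h := by
    have : (i:ℝ) ≤ (N:ℝ)+1 := by exact_mod_cast hi
    nlinarith
  rw [Prod.dist_eq]
  refine max_le ?_ ?_
  · rw [dist_eq_norm]; nlinarith
  · rw [Real.dist_eq, add_sub_cancel_left, abs_of_nonneg (by positivity)]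
    nlinarith [mul_nonneg hM (by positivity : (0:ℝ) ≤ ((N:ℝ)+1)*h)]

theorem eulerV_bound (hh : 0 < h) (hM : 0 ≤ M)
    (hselB : ∀ q : En n × ℝ, dist q (x₀, t₀) ≤ r → ‖sel q‖ ≤ M)
    (hroom : (M + 1) * ((N + 1) * h) ≤ r) (t : ℝ) :
    ‖eulerV sel x₀ t₀ h N t‖ ≤ M :=
  hselB _ (eulerY_ball hh hM hselB hroom _ ((eulerIdx_le t₀ h N t).trans (Nat.le_succ N)))

theorem bdd_meas_intervalIntegrable {g : ℝ → En n} (hg : Measurable g) {M : ℝ}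
    (hb : ∀ t, ‖g t‖ ≤ M) (c d : ℝ) : IntervalIntegrable g volume c d := by
  rw [intervalIntegrable_iff]
  exact Integrable.mono' (integrableOn_const measure_Ioc_lt_top.ne)
    hg.aestronglyMeasurable.restrict (ae_of_all _ hb)

theorem bdd_meas_locallyIntegrable {g : ℝ → En n} (hg : Measurable g) {M : ℝ}
    (hb : ∀ t, ‖g t‖ ≤ M) : LocallyIntegrable g volume := by
  intro x
  refine ⟨Ioo (x-1) (x+1), Ioo_mem_nhds (by linarith) (by linarith), ?_⟩
  exact Integrable.mono' (integrableOn_const measure_Ioo_lt_top.ne)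
    hg.aestronglyMeasurable.restrict (ae_of_all _ hb)

/-- On the open grid interval `(t_i, t_{i+1})` the index is `i`. -/
theorem eulerIdx_eq (hh : 0 < h) {i : ℕ} (hi : i ≤ N) {s : ℝ}
    (hs1 : t₀ + i * h < s) (hs2 : s < t₀ + (i+1) * h) : eulerIdx t₀ h N s = i := by
  have h1 : (i : ℝ) ≤ (s - t₀)/h := by
    rw [le_div_iff₀ hh]; linarith
  have h2 : (s - t₀)/h < (i : ℝ) + 1 := by
    rw [div_lt_iff₀ hh]; push_cast; nlinarith
  have hfl : ⌊(s - t₀)/h⌋₊ = i := by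
    rw [Nat.floor_eq_iff (le_trans (Nat.cast_nonneg i) h1)]
    exact ⟨h1, by exact_mod_cast h2⟩
  rw [eulerIdx, hfl, min_eq_right hi]

/-- Node values of the Euler polygon. -/
theorem eulerX_node (hh : 0 < h)
    (hint : ∀ c d : ℝ, IntervalIntegrable (eulerV sel x₀ t₀ h N) volume c d) :
    ∀ i ≤ N + 1, eulerX sel x₀ t₀ h N (t₀ + i * h) = eulerY sel x₀ t₀ h i := by
  intro i hi
  induction i with
  | zero => simp [eulerX, eulerY]
  | succ i ih =>
    have hiN : i ≤ N := Nat.lt_succ_iff.1 hi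
    have hIH := ih (hiN.trans (Nat.le_succ N))
    have hle : t₀ + i * h ≤ t₀ + (i+1 : ℕ) * h := by push_cast; nlinarith
    have hsplit : eulerX sel x₀ t₀ h N (t₀ + (i+1 : ℕ) * h)
        = eulerX sel x₀ t₀ h N (t₀ + i * h)
          + ∫ s in (t₀ + i * h)..(t₀ + (i+1:ℕ) * h), eulerV sel x₀ t₀ h N s := by
      rw [eulerX, eulerX, add_assoc]
      congr 1
      rw [intervalIntegral.integral_add_adjacent_intervals (hint _ _) (hint _ _)]
    have hconst : ∫ s in (t₀ + i * h)..(t₀ + (i+1:ℕ) * h), eulerV sel x₀ t₀ h N s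
        = h • sel (eulerY sel x₀ t₀ h i, t₀ + i * h) := by
      rw [intervalIntegral.integral_of_le hle, integral_Ioc_eq_integral_Ioo]
      rw [setIntegral_congr_fun measurableSet_Ioo
        (fun s hs => ?_), setIntegral_const]
      · have : volume (Ioo (t₀ + i * h) (t₀ + (i+1:ℕ) * h)) = ENNReal.ofReal h := by
          rw [Real.volume_Ioo]; congr 1; push_cast; ring
        rw [measureReal_def, this, ENNReal.toReal_ofReal hh.le]
      · have := eulerIdx_eq (t₀ := t₀) hh hiN hs.1 (by push_cast at hs ⊢; exact hs.2)
        rw [eulerV, this]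
    rw [hsplit, hIH, hconst, eulerY]

/-- The Euler velocity at time `s ∈ [t₀, t₀+(N+1)h]` is the selection at a nearby grid point. -/
theorem eulerV_spec (hh : 0 < h) {s : ℝ} (hs1 : t₀ ≤ s) (hs2 : s ≤ t₀ + (N+1) * h) :
    ∃ i : ℕ, i ≤ N ∧ t₀ + i * h ≤ s ∧ s - (t₀ + i * h) ≤ h ∧
      eulerV sel x₀ t₀ h N s = sel (eulerY sel x₀ t₀ h i, t₀ + i * h) := by
  refine ⟨eulerIdx t₀ h N s, eulerIdx_le t₀ h N s, ?_, ?_, rfl⟩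
  · have h1 : (eulerIdx t₀ h N s : ℝ) ≤ (s - t₀)/h := by
      calc (eulerIdx t₀ h N s : ℝ) ≤ (⌊(s - t₀)/h⌋₊ : ℝ) := by
            exact_mod_cast min_le_right _ _
        _ ≤ (s - t₀)/h := Nat.floor_le (div_nonneg (by linarith) hh.le)
    rw [le_div_iff₀ hh] at h1
    linarith
  · rcases le_or_gt (⌊(s - t₀)/h⌋₊ : ℕ) N with hc | hc
    · have hidx : eulerIdx t₀ h N s = ⌊(s - t₀)/h⌋₊ := min_eq_right hc
      have := Nat.lt_floor_add_one ((s - t₀)/h)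
      rw [div_lt_iff₀ hh] at this
      rw [hidx]; nlinarith
    · have hidx : eulerIdx t₀ h N s = N := min_eq_left hc.le
      rw [hidx]
      have : ((N:ℝ)+1) * h = N * h + h := by ring
      nlinarith
  <;> skip

/-- A scaled integral of a function with values in a closed convex set lies in that set. -/
theorem smul_integral_mem {C : Set (En n)} (hC : Convex ℝ C) (hCc : IsClosed C)
    {v : ℝ → En n} {t h : ℝ} (hh : 0 < h) (hvi : IntegrableOn v (Ioc t (t+h)) volume)
    (hvC : ∀ s ∈ Ioc t (t+h), v s ∈ C) :
    h⁻¹ • ∫ s in t..(t+h), v s ∈ C := by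
  have h0 : volume (Ioc t (t+h)) = ENNReal.ofReal h := by
    rw [Real.volume_Ioc]; congr 1; ring
  have havg := hC.set_average_mem hCc (by rw [h0]; simp [hh, hh.le, hh.ne'])
    (by rw [h0]; exact ENNReal.ofReal_ne_top) ((ae_restrict_mem measurableSet_Ioc).mono fun s hs => hvC s hs) hvi
  rw [setAverage_eq, measureReal_def, h0, ENNReal.toReal_ofReal hh.le] at havg
  rwa [intervalIntegral.integral_of_le (by linarith)]

/-- The set of `M`-Lipschitz maps on `[a,b]` with prescribed initial value is compact. -/
theorem lipset_compact {a b : ℝ} (hab : a ≤ b) (x₀ : En n) (M : NNReal) :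
    IsCompact {f : C(Icc a b, En n) | LipschitzWith M f ∧ f ⟨a, left_mem_Icc.2 hab⟩ = x₀} := by
  set p0 : Icc a b := ⟨a, left_mem_Icc.2 hab⟩
  set S : Set C(Icc a b, En n) := {f | LipschitzWith M f ∧ f p0 = x₀}
  apply ArzelaAscoli.isCompact_of_equicontinuous
  · -- image in pi topology is compact
    have himg : (ContinuousMap.toFun '' S) =
        {g : Icc a b → En n | LipschitzWith M g ∧ g p0 = x₀} := by
      ext g
      constructor
      · rintro ⟨f, ⟨hf1, hf2⟩, rfl⟩; exact ⟨hf1, hf2⟩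
      · rintro ⟨hg1, hg2⟩
        exact ⟨⟨g, hg1.continuous⟩, ⟨hg1, hg2⟩, rfl⟩
    rw [himg]
    have hsub : {g : Icc a b → En n | LipschitzWith M g ∧ g p0 = x₀} ⊆
        Set.pi univ (fun _ => Metric.closedBall x₀ ((M : ℝ) * (b - a))) := by
      rintro g ⟨hg1, hg2⟩ t _
      have := hg1.dist_le_mul t p0
      have hd : dist t p0 ≤ b - a := by
        rw [Subtype.dist_eq, Real.dist_eq, abs_le]
        constructor <;> [linarith [t.2.1, t.2.2]; linarith [t.2.1, t.2.2]]
      rw [Metric.mem_closedBall, ← hg2]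
      calc dist (g t) (g p0) ≤ (M:ℝ) * dist t p0 := this
        _ ≤ (M:ℝ) * (b - a) := by
            exact mul_le_mul_of_nonneg_left hd M.2
    have hcl : IsClosed {g : Icc a b → En n | LipschitzWith M g ∧ g p0 = x₀} := by
      have h1 : IsClosed {g : Icc a b → En n | LipschitzWith M g} := by
        have : {g : Icc a b → En n | LipschitzWith M g} =
            ⋂ (p : Icc a b) (q : Icc a b),
              {g | dist (g p) (g q) ≤ (M:ℝ) * dist p q} := by
          ext g; simp only [mem_setOf_eq, mem_iInter, lipschitzWith_iff_dist_le_mul]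
        rw [this]
        exact isClosed_iInter fun p => isClosed_iInter fun q =>
          isClosed_le (((continuous_apply p).dist (continuous_apply q))) continuous_const
      have h2 : IsClosed {g : Icc a b → En n | g p0 = x₀} :=
        isClosed_eq (continuous_apply p0) continuous_const
      exact h1.inter h2
    refine IsCompact.of_isClosed_subset ?_ hcl hsub
    exact isCompact_univ_pi fun _ => isCompact_closedBall _ _
  · -- equicontinuity
    apply equicontinuous_of_continuity_modulus (fun d => (M:ℝ) * d)
    · have : Tendsto (fun d : ℝ => (M:ℝ) * d) (𝓝 0) (𝓝 ((M:ℝ) * 0)) :=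
        (continuous_const.mul continuous_id).tendsto 0
      simpa using this
    · intro p q i
      exact i.2.1.dist_le_mul p q

set_option maxHeartbeats 3000000 in
/-- **Local existence for differential inclusions** (Filippov). If `F` is upper
semicontinuous on an open set `G ⊆ ℝⁿ × ℝ` with nonempty compact convex values, then through
every point `(x₀, t₀) ∈ G` there is a local solution of `ẋ ∈ F (x, t)`, `x (t₀) = x₀`,
whose graph stays in `G`. -/
theorem stmt0 {n : ℕ} (G : Set (En n × ℝ)) (hG : IsOpen G)
    (F : En n → ℝ → Set (En n)) (hUSC : USCOn F G)
    (hne : ∀ p ∈ G, (F p.1 p.2).Nonempty)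
    (hcpt : ∀ p ∈ G, IsCompact (F p.1 p.2))
    (hconv : ∀ p ∈ G, Convex ℝ (F p.1 p.2))
    (x₀ : En n) (t₀ : ℝ) (h₀ : (x₀, t₀) ∈ G) :
    ∃ t₁ > t₀, ∃ x : ℝ → En n, x t₀ = x₀ ∧
      IsDISolution F (Set.Icc t₀ t₁) t₀ x ∧
      ∀ t ∈ Set.Icc t₀ t₁, (x t, t) ∈ G := by
  classical
  obtain ⟨r0, hr0, hball0⟩ : ∃ r0 > 0, Metric.closedBall ((x₀, t₀) : En n × ℝ) r0 ⊆ G := by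
    rcases Metric.isOpen_iff.1 hG _ h₀ with ⟨ε, hε, hb⟩
    exact ⟨ε/2, by linarith, (Metric.closedBall_subset_ball (by linarith)).trans hb⟩
  obtain ⟨M₀, hM₀⟩ : ∃ M₀ : ℝ, ∀ w ∈ F x₀ t₀, ‖w‖ ≤ M₀ := by
    rcases (hcpt _ h₀).isBounded.subset_closedBall 0 with ⟨c, hc⟩
    exact ⟨c, fun w hw => by simpa using hc hw⟩
  obtain ⟨δ₁, hδ₁, hδ₁'⟩ := hUSC _ h₀ 1 one_pos
  set M : ℝ := max M₀ 0 + 1 with hMdef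
  have hM0 : 0 ≤ M := by positivity
  set r : ℝ := min r0 (δ₁/2) with hrdef
  have hr : 0 < r := lt_min hr0 (by linarith)
  have hFb : ∀ q : En n × ℝ, dist q (x₀, t₀) ≤ r → q ∈ G ∧ ∀ w ∈ F q.1 q.2, ‖w‖ ≤ M := by
    intro q hq
    have hqG : q ∈ G := hball0 (Metric.mem_closedBall.2 (hq.trans (min_le_left _ _)))
    refine ⟨hqG, fun w hw => ?_⟩
    have h1 : Metric.infDist w (F x₀ t₀) < 1 :=
      hδ₁' q (lt_of_le_of_lt (hq.trans (min_le_right _ _)) (by linarith)) w hw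
    rcases (Metric.infDist_lt_iff (hne _ h₀)).1 h1 with ⟨y, hy, hdy⟩
    have : ‖w‖ ≤ ‖y‖ + dist w y := by
      rw [dist_eq_norm]
      calc ‖w‖ = ‖y + (w - y)‖ := by congr 1; abel
        _ ≤ ‖y‖ + ‖w - y‖ := norm_add_le _ _
    have hy' := hM₀ y hy
    rw [hMdef]
    have : ‖w‖ ≤ M₀ + 1 := by linarith
    have h2 : M₀ ≤ max M₀ 0 := le_max_left _ _
    linarith
  set a : ℝ := r / (M + 2) with hadef
  have ha : 0 < a := by positivity
  have hkey : a * (M + 2) = r := by rw [hadef]; field_simp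
  have haM : M * a ≤ r ∧ a ≤ r := by
    constructor <;> nlinarith [mul_nonneg hM0 ha.le, ha.le]
  refine ⟨t₀ + a, by linarith, ?_⟩
  -- the selection
  set sel : En n × ℝ → En n := fun q => if hq : q ∈ G then (hne q hq).choose else 0 with hseldef
  have hsel : ∀ q, ∀ hq : q ∈ G, sel q ∈ F q.1 q.2 := fun q hq => by
    simp only [hseldef, dif_pos hq]; exact (hne q hq).choose_spec
  have hselB : ∀ q : En n × ℝ, dist q (x₀, t₀) ≤ r → ‖sel q‖ ≤ M := fun q hq =>
    (hFb q hq).2 _ (hsel q (hFb q hq).1)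
  -- step sizes and Euler data
  set hs : ℕ → ℝ := fun N => a / (N + 1) with hhsdef
  have hh : ∀ N, 0 < hs N := fun N => by positivity
  have hNh : ∀ N : ℕ, ((N : ℝ) + 1) * hs N = a := fun N => by
    rw [hhsdef]; field_simp
  have hroom : ∀ N : ℕ, (M + 1) * (((N : ℝ) + 1) * hs N) ≤ r := by
    intro N; rw [hNh]
    nlinarith [haM.1, haM.2, ha]
  set v : ℕ → ℝ → En n := fun N => eulerV sel x₀ t₀ (hs N) N with hvdef
  have hvb : ∀ N t, ‖v N t‖ ≤ M := fun N t =>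
    eulerV_bound (hh N) hM0 hselB (hroom N) t
  have hvm : ∀ N, Measurable (v N) := fun N => eulerV_measurable (hh N) N
  have hvint : ∀ N, ∀ c d : ℝ, IntervalIntegrable (v N) volume c d := fun N =>
    bdd_meas_intervalIntegrable (hvm N) (hvb N)
  set xN : ℕ → ℝ → En n := fun N => eulerX sel x₀ t₀ (hs N) N with hxNdef
  set M' : NNReal := ⟨M, hM0⟩ with hM'def
  have hM'c : (M' : ℝ) = M := rfl
  have hxNlip : ∀ N, LipschitzWith M' (xN N) := by
    intro N
    rw [lipschitzWith_iff_dist_le_mul]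
    intro s t
    have : xN N s - xN N t = ∫ τ in t..s, v N τ := by
      simp only [hxNdef, eulerX, add_sub_add_left_eq_sub]
      exact (integral_interval_sub_left (hvint N _ _) (hvint N _ _))
    rw [dist_eq_norm, this, hM'c]
    calc ‖∫ τ in t..s, v N τ‖ ≤ M * |s - t| :=
          intervalIntegral.norm_integral_le_of_norm_le_const (fun τ _ => hvb N τ)
      _ = M * dist s t := by rw [Real.dist_eq]
  have hxNval : ∀ N, xN N t₀ = x₀ := fun N => by
    simp [hxNdef, eulerX]
  -- Ascoli
  have hle : t₀ ≤ t₀ + a := by linarith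
  set XN : ℕ → C(Icc t₀ (t₀ + a), En n) := fun N =>
    ⟨fun s => xN N s, (hxNlip N).continuous.comp continuous_subtype_val⟩ with hXNdef
  have hXNmem : ∀ N, XN N ∈ {f : C(Icc t₀ (t₀ + a), En n) |
      LipschitzWith M' f ∧ f ⟨t₀, left_mem_Icc.2 hle⟩ = x₀} := by
    intro N
    constructor
    · have := (hxNlip N).comp (LipschitzWith.subtype_val (Icc t₀ (t₀ + a)))
      rw [mul_one] at this; exact this
    · exact hxNval N
  obtain ⟨X', hX'S, φ, hφmono, hφconv⟩ :=
    (lipset_compact hle x₀ M').tendsto_subseq hXNmem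
  have hunif : TendstoUniformly (fun j s => XN (φ j) s) X' atTop := by
    rw [← ContinuousMap.tendsto_iff_tendstoUniformly]
    exact hφconv
  -- the limit solution
  set x : ℝ → En n := fun t => X' (projIcc t₀ (t₀ + a) hle t) with hxdef
  have hxagree : ∀ t, ∀ ht : t ∈ Icc t₀ (t₀ + a), x t = X' ⟨t, ht⟩ := by
    intro t ht; rw [hxdef]; simp only; rw [projIcc_of_mem hle ht]
  have hxlip : LipschitzWith M' x := by
    have := hX'S.1.comp (LipschitzWith.projIcc hle)
    rw [mul_one] at this; exact this
  have hxt₀ : x t₀ = x₀ := by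
    rw [hxagree t₀ (left_mem_Icc.2 hle)]; exact hX'S.2
  have hgraph : ∀ t ∈ Icc t₀ (t₀ + a), dist ((x t, t) : En n × ℝ) (x₀, t₀) ≤ r := by
    intro t ht
    rw [Prod.dist_eq]
    refine max_le ?_ ?_
    · have h1 : dist (x t) (x t₀) ≤ (M' : ℝ) * dist t t₀ := hxlip.dist_le_mul t t₀
      rw [hxt₀] at h1
      have h2 : dist t t₀ ≤ a := by rw [Real.dist_eq, abs_of_nonneg (by linarith [ht.1])]
                                    linarith [ht.2]
      calc dist (x t) x₀ ≤ (M' : ℝ) * dist t t₀ := h1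
        _ ≤ M * a := by rw [hM'c]; exact mul_le_mul_of_nonneg_left h2 hM0
        _ ≤ r := haM.1
    · rw [Real.dist_eq, abs_of_nonneg (by linarith [ht.1])]
      linarith [ht.2, haM.2]
  have hgraphG : ∀ t ∈ Icc t₀ (t₀ + a), ((x t, t) : En n × ℝ) ∈ G := fun t ht =>
    (hFb _ (hgraph t ht)).1
  -- the velocity
  have hvM : ∀ t, ‖deriv x t‖ ≤ M := by
    intro t
    have h1 : deriv x t = fderiv ℝ x t 1 := (fderiv_apply_one_eq_deriv).symm
    rw [h1]
    calc ‖fderiv ℝ x t 1‖ ≤ ‖fderiv ℝ x t‖ * ‖(1:ℝ)‖ := (fderiv ℝ x t).le_opNorm 1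
      _ ≤ (M' : ℝ) * 1 := by
          rw [norm_one]
          exact mul_le_mul_of_nonneg_right (norm_fderiv_le_of_lipschitz ℝ hxlip) zero_le_one
      _ = M := by rw [hM'c, mul_one]
  have hvmeas : Measurable (deriv x) := measurable_deriv x
  have hFTC : ∀ t ∈ Icc t₀ (t₀ + a), x t = x t₀ + ∫ s in t₀..t, deriv x s := by
    intro t ht
    rw [lip_ftc hxlip ht.1]
    abel
  have hae : ∀ᵐ t ∂(volume.restrict (Icc t₀ (t₀ + a))), deriv x t ∈ F (x t) t := by
    have h1 : ∀ᵐ t ∂(volume.restrict (Icc t₀ (t₀ + a))), DifferentiableAt ℝ x t :=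
      ae_restrict_of_ae hxlip.ae_differentiableAt
    have h2 : ∀ᵐ t ∂(volume.restrict (Icc t₀ (t₀ + a))), t ∈ Icc t₀ (t₀ + a) :=
      ae_restrict_mem measurableSet_Icc
    have h3 : ∀ᵐ t ∂(volume.restrict (Icc t₀ (t₀ + a))), t ∉ ({t₀ + a} : Set ℝ) := by
      refine ae_restrict_of_ae ?_
      exact measure_eq_zero_iff_ae_notMem.1 (measure_singleton _)
    filter_upwards [h1, h2, h3] with t hdiff ht htne
    have htlt : t < t₀ + a := lt_of_le_of_ne ht.2 (by simpa using htne)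
    have hpG : ((x t, t) : En n × ℝ) ∈ G := hgraphG t ht
    have hFcl : IsClosed (F (x t) t) := (hcpt _ hpG).isClosed
    have hFne : (F (x t) t).Nonempty := hne _ hpG
    rw [hFcl.mem_iff_infDist_zero hFne]
    refine le_antisymm ?_ Metric.infDist_nonneg
    by_contra hcon
    push_neg at hcon
    set ε : ℝ := Metric.infDist (deriv x t) (F (x t) t) / 2 with hεdef
    have hε : 0 < ε := by positivity
    -- main claim
    have hmem : deriv x t ∈ Metric.cthickening ε (F (x t) t) := by
      obtain ⟨δ, hδ, hδ'⟩ := hUSC (x t, t) hpG ε hε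
      set C := Metric.cthickening ε (F (x t) t) with hCdef
      have hCconv : Convex ℝ C := (hconv _ hpG).cthickening ε
      have hCcl : IsClosed C := Metric.isClosed_cthickening
      set η : ℝ := min (t₀ + a - t) (δ / (4 * (M + 2))) with hηdef
      have hη : 0 < η := lt_min (by linarith) (by positivity)
      have key : ∀ h', 0 < h' → h' ≤ η → h'⁻¹ • (x (t + h') - x t) ∈ C := by
        intro h' hh' hh'η
        have hth' : t + h' ≤ t₀ + a := by
          have := hh'η.trans (min_le_left _ _); linarith
        have hh'δ : h' ≤ δ / (4 * (M + 2)) := hh'η.trans (min_le_right _ _)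
        have hev : ∀ᶠ j in atTop, h'⁻¹ • (xN (φ j) (t + h') - xN (φ j) t) ∈ C := by
          have hφtop : Tendsto (fun j => (φ j : ℝ)) atTop atTop :=
            tendsto_natCast_atTop_atTop.comp hφmono.tendsto_atTop
          have hsmall : Tendsto (fun j => hs (φ j)) atTop (𝓝 0) := by
            simp only [hhsdef]
            exact Tendsto.div_atTop tendsto_const_nhds (hφtop.atTop_add tendsto_const_nhds)
          have hev1 : ∀ᶠ j in atTop, (M + 2) * hs (φ j) < δ / 4 := by
            have h5 : Tendsto (fun j => (M + 2) * hs (φ j)) atTop (𝓝 ((M+2) * 0)) :=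
              tendsto_const_nhds.mul hsmall
            rw [mul_zero] at h5
            exact h5.eventually_lt_const (by positivity)
          have hev2 : ∀ᶠ j in atTop,
              ∀ s : Icc t₀ (t₀ + a), dist (XN (φ j) s) (X' s) < δ / 4 := by
            have := Metric.tendstoUniformly_iff.1 hunif (δ/4) (by positivity)
            exact this.mono fun j hj s => by rw [dist_comm]; exact hj s
          filter_upwards [hev1, hev2] with j hj1 hj2
          set N := φ j with hNdef
          have hQ : xN N (t + h') - xN N t = ∫ s in t..(t + h'), v N s := by
            simp only [hxNdef, eulerX, add_sub_add_left_eq_sub]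
            exact integral_interval_sub_left (hvint N _ _) (hvint N _ _)
          rw [hQ]
          refine smul_integral_mem hCconv hCcl hh' (hvint N t (t+h')).1 ?_
          intro s hsIoc
          have hsIcc : s ∈ Icc t₀ (t₀ + a) := ⟨le_trans ht.1 hsIoc.1.le, hsIoc.2.trans hth'⟩
          have hend : t₀ + ((N:ℝ) + 1) * hs N = t₀ + a := by rw [hNh]
          obtain ⟨i, hiN, hτ1, hτ2, hveq⟩ :=
            eulerV_spec (hh N) (s := s) hsIcc.1 (by rw [hend]; exact hsIcc.2)
          set τ := t₀ + (i:ℝ) * hs N with hτdef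
          set yi := eulerY sel x₀ t₀ (hs N) i with hyidef
          have hiN1 : i ≤ N + 1 := hiN.trans (Nat.le_succ N)
          have hgrid_ball : dist ((yi, τ) : En n × ℝ) (x₀, t₀) ≤ r :=
            eulerY_ball (hh N) hM0 hselB (hroom N) i hiN1
          have hgridG : ((yi, τ) : En n × ℝ) ∈ G := (hFb _ hgrid_ball).1
          have hmemF : v N s ∈ F yi τ := by
            show eulerV sel x₀ t₀ (hs N) N s ∈ F yi τ
            rw [hveq]; exact hsel _ hgridG
          have hyix : yi = xN N τ := (eulerX_node (hh N) (hvint N) i hiN1).symm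
          have hd1 : dist yi (xN N s) ≤ M * hs N := by
            rw [hyix]
            calc dist (xN N τ) (xN N s) ≤ (M' : ℝ) * dist τ s := (hxNlip N).dist_le_mul τ s
              _ ≤ M * hs N := by
                  rw [hM'c, Real.dist_eq, abs_of_nonpos (by linarith), neg_sub]
                  exact mul_le_mul_of_nonneg_left hτ2 hM0
          have hd2 : dist (xN N s) (x s) < δ / 4 := by
            have := hj2 ⟨s, hsIcc⟩
            rw [hxagree s hsIcc]
            exact this
          have hd3 : dist (x s) (x t) ≤ M * h' := by
            calc dist (x s) (x t) ≤ (M' : ℝ) * dist s t := hxlip.dist_le_mul s t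
              _ ≤ M * h' := by
                  rw [hM'c, Real.dist_eq, abs_of_nonneg (by linarith [hsIoc.1])]
                  have : s - t ≤ h' := by linarith [hsIoc.2]
                  exact mul_le_mul_of_nonneg_left this hM0
          have hMh' : M * h' ≤ δ / 4 := by
            have h6 : M * h' ≤ M * (δ / (4 * (M + 2))) := mul_le_mul_of_nonneg_left hh'δ hM0
            have h7 : M * (δ / (4 * (M + 2))) ≤ δ / 4 := by
              rw [show M * (δ / (4 * (M + 2))) = M * δ / (4 * (M + 2)) from
                (mul_div_assoc _ _ _).symm,
                div_le_div_iff₀ (by positivity) (by norm_num : (0:ℝ) < 4)]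
              nlinarith [mul_nonneg hM0 hδ.le]
            linarith
          have hMhN : M * hs N ≤ δ / 4 := by
            nlinarith [mul_pos (by linarith : (0:ℝ) < 2) (hh N)]
          have hdist : dist ((yi, τ) : En n × ℝ) ((x t, t) : En n × ℝ) < δ := by
            rw [Prod.dist_eq]
            refine max_lt ?_ ?_
            · calc dist yi (x t)
                  ≤ dist yi (xN N s) + dist (xN N s) (x s) + dist (x s) (x t) :=
                    dist_triangle4 _ _ _ _
                _ < M * hs N + δ/4 + M * h' :=
                    add_lt_add_of_lt_of_le (add_lt_add_of_le_of_lt hd1 hd2) hd3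
                _ ≤ δ/4 + δ/4 + δ/4 := by linarith
                _ < δ := by linarith
            · rw [Real.dist_eq, abs_lt]
              have hτs : τ ≤ s := hτ1
              have hδ4 : δ / (4 * (M+2)) < δ := by
                rw [div_lt_iff₀ (by positivity)]
                nlinarith
              have hhNδ : hs N < δ := by nlinarith [hh N]
              constructor
              · have : s - hs N ≤ τ := by linarith
                have : t - τ ≤ hs N := by linarith [hsIoc.1]
                linarith
              · have : τ - t ≤ h' := by linarith [hsIoc.2]
                linarith
          have hinf := hδ' (yi, τ) hdist _ hmemF
          exact Metric.thickening_subset_cthickening ε _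
            ((Metric.mem_thickening_iff_infDist_lt hFne).2 hinf)
        have hlim : Tendsto (fun j => h'⁻¹ • (xN (φ j) (t + h') - xN (φ j) t)) atTop
            (𝓝 (h'⁻¹ • (x (t + h') - x t))) := by
          have hmem1 : t + h' ∈ Icc t₀ (t₀ + a) := ⟨by linarith [ht.1], hth'⟩
          have l1 : Tendsto (fun j => xN (φ j) (t + h')) atTop (𝓝 (x (t + h'))) := by
            rw [hxagree (t + h') hmem1]
            exact hunif.tendsto_at ⟨t + h', hmem1⟩
          have l2 : Tendsto (fun j => xN (φ j) t) atTop (𝓝 (x t)) := by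
            rw [hxagree t ht]
            exact hunif.tendsto_at ⟨t, ht⟩
          exact (l1.sub l2).const_smul _
        exact hCcl.mem_of_tendsto hlim hev
      -- pass to the derivative
      have hder : HasDerivAt x (deriv x t) t := hdiff.hasDerivAt
      have hslope := hasDerivAt_iff_tendsto_slope.1 hder
      have hsub : Ioi t ⊆ {t}ᶜ := fun s hsn => (ne_of_gt hsn)
      have hslope' : Tendsto (slope x t) (𝓝[>] t) (𝓝 (deriv x t)) :=
        hslope.mono_left (nhdsWithin_mono t hsub)
      refine (Metric.isClosed_cthickening).mem_of_tendsto hslope' ?_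
      filter_upwards [Ioc_mem_nhdsGT_of_mem (⟨le_rfl, by linarith⟩ : t ∈ Ico t (t + η))]
        with s hsmem
      have hh' : 0 < s - t := by linarith [hsmem.1]
      have hkey := key (s - t) hh' (by linarith [hsmem.2])
      rw [show t + (s - t) = s by ring] at hkey
      rwa [slope_def_module]
    -- contradiction
    rw [Metric.mem_cthickening_iff] at hmem
    have hfin : Metric.infDist (deriv x t) (F (x t) t) ≤ ε := by
      rw [Metric.infDist]
      exact ENNReal.toReal_le_of_le_ofReal hε.le hmem
    rw [hεdef] at hfin
    linarith
  exact ⟨fun t => X' (projIcc t₀ (t₀ + a) hle t), hxt₀,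
    ⟨deriv x, bdd_meas_locallyIntegrable hvmeas hvM, hFTC, hae⟩, hgraphG⟩
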